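/- Let A be a reversible JW-algebra with faithful normal state ρ. If x_n → x in bundle convergence in A, then the Cesàro means (1/n)∑_{k=1}^n x_k → x in bundle convergence in A. -/

import Mathlib

open Filter Finset
open scoped ComplexOrder Topology

namespace JW

variable {H : Type*} [NormedAddCommGroup H] [InnerProductSpace ℂ H] [CompleteSpace H]

/-- Orthogonal projection predicate. -/
def IsProjection (p : H →L[ℂ] H) : Prop := IsIdempotentElem p ∧ IsSelfAdjoint p

/-- Loewner order: `a ≤ b` iff `b - a` is a positive operator. -/
def OpLE (a b : H →L[ℂ] H) : Prop := (b - a).IsPositive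

/-- The Jordan product `a ∘ b = (ab + ba)/2`. -/
noncomputable def jord (a b : H →L[ℂ] H) : H →L[ℂ] H := (2⁻¹ : ℝ) • (a * b + b * a)

/-- A real W*-algebra: a weakly closed real *-subalgebra `R ⊆ B(H)` with
`R ∩ iR = {0}` and `1 ∈ R`. -/
structure IsRealVNA (R : Set (H →L[ℂ] H)) : Prop where
  zero_mem : (0 : H →L[ℂ] H) ∈ R
  one_mem : (1 : H →L[ℂ] H) ∈ R
  add_mem : ∀ {a b : H →L[ℂ] H}, a ∈ R → b ∈ R → a + b ∈ R
  smul_mem : ∀ (r : ℝ) {a : H →L[ℂ] H}, a ∈ R → r • a ∈ R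
  mul_mem : ∀ {a b : H →L[ℂ] H}, a ∈ R → b ∈ R → a * b ∈ R
  star_mem : ∀ {a : H →L[ℂ] H}, a ∈ R → star a ∈ R
  inter_trivial : ∀ {a : H →L[ℂ] H}, a ∈ R → Complex.I • a ∈ R → a = 0
  wclosed : IsClosed ((ContinuousLinearMapWOT.ofCLM : (H →L[ℂ] H) → H →WOT[ℂ] H) '' R)

/-- The self-adjoint part of a set of operators; for a real W*-algebra `R`,
`saPart R` is the associated reversible JW-algebra. -/
def saPart (R : Set (H →L[ℂ] H)) : Set (H →L[ℂ] H) := {a | a ∈ R ∧ IsSelfAdjoint a}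

/-- A faithful normal state on (the self-adjoint part of) an operator algebra `A`,
given as a real-linear functional. Normality is expressed by sequential order
continuity with respect to strong convergence of increasing sequences. -/
structure IsFNState (A : Set (H →L[ℂ] H)) (ρ : (H →L[ℂ] H) →ₗ[ℝ] ℝ) : Prop where
  pos : ∀ a : H →L[ℂ] H, a.IsPositive → 0 ≤ ρ a
  one : ρ 1 = 1
  faithful : ∀ a ∈ A, a.IsPositive → ρ a = 0 → a = 0
  normal : ∀ (x : ℕ → H →L[ℂ] H) (y : H →L[ℂ] H),
    (∀ n, OpLE (x n) (x (n + 1))) → (∀ n, OpLE (x n) y) →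
    (∀ ξ : H, Tendsto (fun n => x n ξ) atTop (𝓝 (y ξ))) →
    Tendsto (fun n => ρ (x n)) atTop (𝓝 (ρ y))

/-- Membership in the bundle determined by a sequence `D` of positive elements of `A`:
nonzero projections `p ∈ A` with `sup_m ‖p(∑_{k≤m} D_k)p‖ < ∞` and `‖p D_m p‖ → 0`. -/
def InBundle (A : Set (H →L[ℂ] H)) (D : ℕ → H →L[ℂ] H) (p : H →L[ℂ] H) : Prop :=
  p ∈ A ∧ IsProjection p ∧ p ≠ 0 ∧
  (∃ C : ℝ, ∀ m : ℕ, ‖p * (∑ k ∈ Finset.range m, D k) * p‖ ≤ C) ∧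
  Tendsto (fun m => ‖p * D m * p‖) atTop (𝓝 0)

/-- Bundle convergence `x_n → l` in the JW-algebra `A` with state `ρ`. -/
def BundleConv (A : Set (H →L[ℂ] H)) (ρ : (H →L[ℂ] H) →ₗ[ℝ] ℝ)
    (x : ℕ → H →L[ℂ] H) (l : H →L[ℂ] H) : Prop :=
  ∃ D : ℕ → H →L[ℂ] H, (∀ m, D m ∈ A ∧ (D m).IsPositive) ∧
    Summable (fun m => ρ (D m)) ∧
    ∀ p, InBundle A D p → Tendsto (fun n => ‖p * (x n - l) ^ 2 * p‖) atTop (𝓝 0)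

/-- Almost uniform convergence in the JW-algebra `A` with state `ρ`. -/
def AUConv (A : Set (H →L[ℂ] H)) (ρ : (H →L[ℂ] H) →ₗ[ℝ] ℝ)
    (x : ℕ → H →L[ℂ] H) (l : H →L[ℂ] H) : Prop :=
  ∀ ε > (0 : ℝ), ∃ p : H →L[ℂ] H, p ∈ A ∧ IsProjection p ∧ ρ (1 - p) < ε ∧
    Tendsto (fun n => ‖p * (x n - l) ^ 2 * p‖) atTop (𝓝 0)

/-- The enveloping (complex) algebra `W(R) = R + iR` of a real W*-algebra `R`. -/
def envAlg (R : Set (H →L[ℂ] H)) : Set (H →L[ℂ] H) :=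
  {w | ∃ u ∈ R, ∃ v ∈ R, w = u + Complex.I • v}

/-- Bundle convergence in a von Neumann algebra `W` with (the restriction to the reals of)
a state `ρ₁`: there is a sequence `D` of positives in `W` with `∑ ρ₁(D_m) < ∞` such that
`‖(x_n - l)p‖ → 0` for every projection in the corresponding bundle. -/
def BundleConvW (W : Set (H →L[ℂ] H)) (ρ₁ : (H →L[ℂ] H) →ₗ[ℂ] ℂ)
    (x : ℕ → H →L[ℂ] H) (l : H →L[ℂ] H) : Prop :=
  ∃ D : ℕ → H →L[ℂ] H, (∀ m, D m ∈ W ∧ (D m).IsPositive) ∧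
    Summable (fun m => (ρ₁ (D m)).re) ∧
    ∀ p, InBundle W D p → Tendsto (fun n => ‖(x n - l) * p‖) atTop (𝓝 0)


set_option maxHeartbeats 1000000
set_option synthInstance.maxHeartbeats 1000000

/-- bundle convergence `x_n → x` in `A` implies bundle convergence of
the Cesàro means `(1/n) ∑_{k=1}^n x_k → x` in `A`. -/
theorem statement13 (R : Set (H →L[ℂ] H)) (hR : IsRealVNA R)
    (ρ : (H →L[ℂ] H) →ₗ[ℝ] ℝ) (hρ : IsFNState (saPart R) ρ)
    (x : ℕ → H →L[ℂ] H) (hx : ∀ n, x n ∈ saPart R)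
    (l : H →L[ℂ] H) (hl : l ∈ saPart R)
    (h : BundleConv (saPart R) ρ x l) :
    BundleConv (saPart R) ρ
      (fun n => ((n : ℝ)⁻¹) • ∑ k ∈ Finset.range n, x k) l := by
  obtain ⟨D, hD, hSum, hbound⟩ := h
  refine ⟨D, hD, hSum, fun p hpB => ?_⟩
  have hps : IsSelfAdjoint p := hpB.2.1.2
  have hsa : ∀ n, IsSelfAdjoint (x n - l) := fun n => (hx n).2.sub hl.2
  have key : ∀ a : H →L[ℂ] H, IsSelfAdjoint a → ‖p * a ^ 2 * p‖ = ‖a * p‖ ^ 2 := by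
    intro a ha
    have h1 : p * a ^ 2 * p = star (a * p) * (a * p) := by
      rw [star_mul, ha.star_eq, hps.star_eq, sq]
      noncomm_ring
    rw [h1, CStarRing.norm_star_mul_self, sq]
  have h0 : Tendsto (fun n => ‖(x n - l) * p‖) atTop (𝓝 0) := by
    have h1 := hbound p hpB
    have h2 : Tendsto (fun n => ‖(x n - l) * p‖ ^ 2) atTop (𝓝 0) := by
      simpa only [key _ (hsa _)] using h1
    simpa [Function.comp_def, Real.sqrt_sq (norm_nonneg _)] using
      (Real.continuous_sqrt.tendsto 0).comp h2
  have hces : Tendsto (fun n : ℕ => (n : ℝ)⁻¹ * ∑ k ∈ Finset.range n, ‖(x k - l) * p‖)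
      atTop (𝓝 0) := h0.cesaro
  have hrsmul : ∀ (r : ℝ) (a b : H →L[ℂ] H), (r • a) * b = r • (a * b) :=
    fun r a b => ContinuousLinearMap.ext fun ξ => by simp
  have hmain : Tendsto (fun n : ℕ => ‖((n : ℝ)⁻¹ • ∑ k ∈ Finset.range n, x k - l) * p‖)
      atTop (𝓝 0) := by
    refine squeeze_zero' (Eventually.of_forall fun n => norm_nonneg _) ?_ hces
    filter_upwards [eventually_ge_atTop 1] with n hn
    have hn0 : (n : ℝ) ≠ 0 := Nat.cast_ne_zero.mpr (by omega)
    have heq : ((n : ℝ)⁻¹ • ∑ k ∈ Finset.range n, x k - l)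
        = (n : ℝ)⁻¹ • ∑ k ∈ Finset.range n, (x k - l) := by
      rw [Finset.sum_sub_distrib, smul_sub, sub_right_inj, Finset.sum_const,
        Finset.card_range, ← Nat.cast_smul_eq_nsmul ℝ, smul_smul,
        inv_mul_cancel₀ hn0, one_smul]
    calc ‖((n : ℝ)⁻¹ • ∑ k ∈ Finset.range n, x k - l) * p‖
        = ‖(n : ℝ)⁻¹ • ((∑ k ∈ Finset.range n, (x k - l)) * p)‖ := by
          rw [heq, hrsmul]
      _ = (n : ℝ)⁻¹ * ‖(∑ k ∈ Finset.range n, (x k - l)) * p‖ := by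
          rw [norm_smul, Real.norm_eq_abs, abs_of_nonneg (by positivity)]
      _ ≤ (n : ℝ)⁻¹ * ∑ k ∈ Finset.range n, ‖(x k - l) * p‖ := by
          gcongr
          rw [Finset.sum_mul]
          exact norm_sum_le _ _
  have h0' : Tendsto (fun n => ‖p * (x n - l)‖) atTop (𝓝 0) := by
    have he : ∀ n, ‖p * (x n - l)‖ = ‖(x n - l) * p‖ := fun n => by
      conv_lhs => rw [← norm_star, star_mul, (hsa n).star_eq, hps.star_eq]
    simpa only [he] using h0
  have hces' : Tendsto (fun n : ℕ => (n : ℝ)⁻¹ * ∑ k ∈ Finset.range n, ‖p * (x k - l)‖)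
      atTop (𝓝 0) := h0'.cesaro
  have hlsmul : ∀ (r : ℝ) (a b : H →L[ℂ] H), a * (r • b) = r • (a * b) :=
    fun r a b => ContinuousLinearMap.ext fun ξ => by simp
  have hmain' : Tendsto (fun n : ℕ => ‖p * ((n : ℝ)⁻¹ • ∑ k ∈ Finset.range n, x k - l)‖)
      atTop (𝓝 0) := by
    refine squeeze_zero' (Eventually.of_forall fun n => norm_nonneg _) ?_ hces'
    filter_upwards [eventually_ge_atTop 1] with n hn
    have hn0 : (n : ℝ) ≠ 0 := Nat.cast_ne_zero.mpr (by omega)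
    have heq : ((n : ℝ)⁻¹ • ∑ k ∈ Finset.range n, x k - l)
        = (n : ℝ)⁻¹ • ∑ k ∈ Finset.range n, (x k - l) := by
      rw [Finset.sum_sub_distrib, smul_sub, sub_right_inj, Finset.sum_const,
        Finset.card_range, ← Nat.cast_smul_eq_nsmul ℝ, smul_smul,
        inv_mul_cancel₀ hn0, one_smul]
    calc ‖p * ((n : ℝ)⁻¹ • ∑ k ∈ Finset.range n, x k - l)‖
        = ‖(n : ℝ)⁻¹ • (p * ∑ k ∈ Finset.range n, (x k - l))‖ := by
          rw [heq, hlsmul]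
      _ = (n : ℝ)⁻¹ * ‖p * ∑ k ∈ Finset.range n, (x k - l)‖ := by
          rw [norm_smul, Real.norm_eq_abs, abs_of_nonneg (by positivity)]
      _ ≤ (n : ℝ)⁻¹ * ∑ k ∈ Finset.range n, ‖p * (x k - l)‖ := by
          gcongr
          rw [Finset.mul_sum]
          exact norm_sum_le _ _
  refine squeeze_zero' (Eventually.of_forall fun n => norm_nonneg _)
    (Eventually.of_forall fun n => ?_) (by simpa using hmain'.mul hmain)
  have hfac : p * ((n : ℝ)⁻¹ • ∑ k ∈ Finset.range n, x k - l) ^ 2 * p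
      = (p * ((n : ℝ)⁻¹ • ∑ k ∈ Finset.range n, x k - l)) *
        (((n : ℝ)⁻¹ • ∑ k ∈ Finset.range n, x k - l) * p) := by
    rw [sq]; noncomm_ring
  rw [hfac]
  exact norm_mul_le _ _

end JW
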